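/- (Direct-blockage lower bound) Let C be a configuration of the BRP. Then every feasible move sequence for C contains at least as many relocations as the number of direct blockages of C; in particular f(Fin B) is at least the number of direct blockages of C. -/

import Mathlib

/-- A configuration of the BRP: each stack holds a list of blocks, bottom to top. -/
abbrev Config (B S : ℕ) := Fin S → List (Fin B)

/-- Every block occurs exactly once among the stacks. -/
def IsConfig {B S : ℕ} (C : Config B S) : Prop :=
  ∀ b : Fin B, (∑ s : Fin S, (C s).count b) = 1

/-- `a` lies strictly below `b` in stack `s` of `C`. -/
def StrictlyBelow {B S : ℕ} (C : Config B S) (s : Fin S) (a b : Fin B) : Prop :=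
  ∃ i j : ℕ, i < j ∧ (C s)[i]? = some a ∧ (C s)[j]? = some b

/-- A block is badly placed if some smaller-labelled block lies below it in its stack. -/
def BadlyPlaced {B S : ℕ} (C : Config B S) (b : Fin B) : Prop :=
  ∃ s a, a < b ∧ StrictlyBelow C s a b

/-- Moves: retrieve the top block of a stack, or relocate the top block of one
stack onto another stack. -/
inductive Move (S : ℕ) where
  | retrieve (s : Fin S)
  | relocate (src dst : Fin S)

def applyMove {B S : ℕ} (C : Config B S) : Move S → Config B S
  | .retrieve s => Function.update C s (C s).dropLast
  | .relocate src dst =>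
    match (C src).getLast? with
    | some b =>
      let C' := Function.update C src (C src).dropLast
      Function.update C' dst (C' dst ++ [b])
    | none => C

def Enabled {B S : ℕ} (C : Config B S) : Move S → Prop
  | .retrieve s => ∃ b, (C s).getLast? = some b ∧ ∀ (s' : Fin S), ∀ b' ∈ C s', b ≤ b'
  | .relocate src dst => src ≠ dst ∧ C src ≠ []

def play {B S : ℕ} (C : Config B S) : List (Move S) → Config B S
  | [] => C
  | m :: ms => play (applyMove C m) ms

def AllEnabled {B S : ℕ} (C : Config B S) : List (Move S) → Prop
  | [] => True
  | m :: ms => Enabled C m ∧ AllEnabled (applyMove C m) ms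

/-- A feasible move sequence: every move is enabled and at the end all blocks
have been retrieved. -/
def Feasible {B S : ℕ} (C : Config B S) (ms : List (Move S)) : Prop :=
  AllEnabled C ms ∧ ∀ s, play C ms s = []

/-- `b` is the block moved by `m` (a relocation) performed in configuration `C`. -/
def MovedBlock {B S : ℕ} (C : Config B S) (m : Move S) (b : Fin B) : Prop :=
  ∃ src dst, m = .relocate src dst ∧ src ≠ dst ∧ (C src).getLast? = some b

/-- The four types of relocation moves. -/
inductive MType where
  | BB | BG | GB | GG

/-- The relocation `m`, moving block `b` from configuration `C`, has the given type. -/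
def MTypeOf {B S : ℕ} (C : Config B S) (m : Move S) (b : Fin B) : MType → Prop
  | .BB => BadlyPlaced C b ∧ BadlyPlaced (applyMove C m) b
  | .BG => BadlyPlaced C b ∧ ¬ BadlyPlaced (applyMove C m) b
  | .GB => ¬ BadlyPlaced C b ∧ BadlyPlaced (applyMove C m) b
  | .GG => ¬ BadlyPlaced C b ∧ ¬ BadlyPlaced (applyMove C m) b

/-- `m` is a relocation of a block of `𝔅`. -/
def RelocIn {B S : ℕ} (𝔅 : Set (Fin B)) (C : Config B S) (m : Move S) : Prop :=
  ∃ b ∈ 𝔅, MovedBlock C m b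

/-- `m` is a relocation of a block of `𝔅` of type `mt`. -/
def RelocTypeIn {B S : ℕ} (mt : MType) (𝔅 : Set (Fin B)) (C : Config B S) (m : Move S) : Prop :=
  ∃ b ∈ 𝔅, MovedBlock C m b ∧ MTypeOf C m b mt

/-- `m` is a non-BG relocation of a block of `𝔅`. -/
def RelocNonBGIn {B S : ℕ} (𝔅 : Set (Fin B)) (C : Config B S) (m : Move S) : Prop :=
  ∃ b ∈ 𝔅, MovedBlock C m b ∧ ¬ MTypeOf C m b MType.BG

/-- Count the moves of a sequence satisfying `P` (evaluated in the configuration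
in which each move is performed). -/
noncomputable def countMoves {B S : ℕ} (P : Config B S → Move S → Prop) :
    Config B S → List (Move S) → ℕ
  | _, [] => 0
  | C, m :: ms =>
    (@ite ℕ (P C m) (Classical.propDecidable _) 1 0) + countMoves P (applyMove C m) ms

/-- Minimum over feasible move sequences of the number of moves satisfying `P`. -/
noncomputable def fMin {B S : ℕ} (C : Config B S) (P : Config B S → Move S → Prop) : ℕ :=
  sInf { n | ∃ ms, Feasible C ms ∧ countMoves P C ms = n }

/-- `f(𝔅)`: least number of relocations applied to blocks of `𝔅`. -/
noncomputable def fRel {B S : ℕ} (C : Config B S) (𝔅 : Set (Fin B)) : ℕ :=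
  fMin C (RelocIn 𝔅)

/-- `f_mt(𝔅)`: least number of type-`mt` relocations applied to blocks of `𝔅`. -/
noncomputable def fTyp {B S : ℕ} (C : Config B S) (mt : MType) (𝔅 : Set (Fin B)) : ℕ :=
  fMin C (RelocTypeIn mt 𝔅)

/-- `f_nonBG(𝔅)`: least number of non-BG relocations applied to blocks of `𝔅`. -/
noncomputable def fNonBG {B S : ℕ} (C : Config B S) (𝔅 : Set (Fin B)) : ℕ :=
  fMin C (RelocNonBGIn 𝔅)

/-- The top 1st layer: the topmost block of each stack. -/
def TopLayer {B S : ℕ} (C : Config B S) : Set (Fin B) :=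
  {b | ∃ s, (C s).getLast? = some b}

/-- The top `k` layers: the topmost `k` blocks of every stack. -/
def TopK {B S : ℕ} (C : Config B S) (k : ℕ) : Set (Fin B) :=
  {b | ∃ s, b ∈ (C s).drop ((C s).length - k)}

/-- The top `j`-th layer: the `j`-th block from the top of every stack. -/
def TopJth {B S : ℕ} (C : Config B S) (j : ℕ) : Set (Fin B) :=
  {b | ∃ s, (C s)[(C s).length - j]? = some b}

/-- A virtual layer: a set of blocks containing exactly one block from each stack. -/
def VirtualLayer {B S : ℕ} (C : Config B S) (V : Set (Fin B)) : Prop :=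
  ∀ s : Fin S, ∃! b : Fin B, b ∈ V ∧ b ∈ C s

/-- `a` lies at or below the `V`-block of stack `s`. -/
def AtOrBelowLayer {B S : ℕ} (C : Config B S) (V : Set (Fin B)) (s : Fin S) (a : Fin B) : Prop :=
  ∃ b j, b ∈ V ∧ (C s)[j]? = some b ∧ a ∈ (C s).take (j + 1)

/-- `V` is a virtual layer satisfying the conditions of Property 5:
(1) in some stack, a block strictly below the `V`-block of that stack has a smaller
label than every block of `V`; (2) every badly placed block of `V` has a label
strictly greater than the minimum label present in stack `s` after deleting all
blocks strictly above the `V`-block of `s`, for every stack `s`. -/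
def P5 {B S : ℕ} (C : Config B S) (V : Set (Fin B)) : Prop :=
  VirtualLayer C V ∧
  (∃ s a b, b ∈ V ∧ StrictlyBelow C s a b ∧ ∀ c ∈ V, a < c) ∧
  (∀ b ∈ V, BadlyPlaced C b → ∀ s : Fin S, ∃ a, AtOrBelowLayer C V s a ∧ a < b)

/-- A pair of virtual layers `V₁` (upper), `V₂` (lower) with shared well-placed
block `bstar` satisfying the conditions of Property 7. -/
def P7 {B S : ℕ} (C : Config B S) (V₁ V₂ : Set (Fin B)) (bstar : Fin B) : Prop :=
  V₁ ∩ V₂ = {bstar} ∧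
  ¬ BadlyPlaced C bstar ∧
  (∀ s : Fin S, bstar ∉ C s →
    ∃ b₁ b₂, b₁ ∈ V₁ ∧ b₂ ∈ V₂ ∧ StrictlyBelow C s b₂ b₁) ∧
  P5 C V₁ ∧ P5 C V₂ ∧
  (∀ s : Fin S, ∃ a, AtOrBelowLayer C V₁ s a ∧ a ≤ bstar) ∧
  (∃ s : Fin S, ∀ a, AtOrBelowLayer C V₁ s a → bstar ≤ a)

/-- Push blocks one by one onto the indicated stacks. -/
def pushAll {B S : ℕ} (C : Config B S) : List (Fin B × Fin S) → Config B S
  | [] => C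
  | p :: rest => pushAll (Function.update C p.2 (C p.2 ++ [p.1])) rest

/-- The blocks lying strictly above position `i` of stack `s`, listed from the
top of the stack downward (the processing order of the experiment). -/
def aboveList {B S : ℕ} (C : Config B S) (s : Fin S) (i : ℕ) : List (Fin B) :=
  ((C s).drop (i + 1)).reverse

/-- The arrangement resulting from the experiment of Property 4: the blocks above
position `i` of stack `s` are relocated exactly once, from the top downward, onto
the stacks listed in `ds`. -/
def expResult {B S : ℕ} (C : Config B S) (s : Fin S) (i : ℕ) (ds : List (Fin S)) :
    Config B S :=
  pushAll (Function.update C s ((C s).take (i + 1))) ((aboveList C s i).zip ds)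

/-- The condition of Property 4 (target block at position `i` of stack `sStar`):
in every experiment, some relocated block ends badly placed. -/
def P4Cond {B S : ℕ} (C : Config B S) (sStar : Fin S) (i : ℕ) : Prop :=
  ∀ ds : List (Fin S), ds.length = (aboveList C sStar i).length →
    (∀ d ∈ ds, d ≠ sStar) →
    ∃ b ∈ aboveList C sStar i, BadlyPlaced (expResult C sStar i ds) b

/-- The set `𝔅⁴`: the blocks above the target block together with, for each
nonempty stack other than the target's stack, its block of minimum label. -/
def B4Set {B S : ℕ} (C : Config B S) (sStar : Fin S) (i : ℕ) : Set (Fin B) :=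
  {b | b ∈ aboveList C sStar i} ∪
  {b | ∃ s, s ≠ sStar ∧ b ∈ C s ∧ ∀ b' ∈ C s, b ≤ b'}

/-- The number of direct blockages: adjacent pairs in a stack whose upper block
has a strictly larger label. -/
def directBlockages {B S : ℕ} (C : Config B S) : ℕ :=
  ∑ s : Fin S, (((C s).zip (C s).tail).filter (fun p => decide (p.1 < p.2))).length

/-- The number of relocations in a move sequence. -/
def relocCount {S : ℕ} (ms : List (Move S)) : ℕ :=
  (ms.filter (fun m => match m with | Move.relocate _ _ => true | Move.retrieve _ => false)).length

/-- The minimum number of relocations over all feasible move sequences. -/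
noncomputable def fAll {B S : ℕ} (C : Config B S) : ℕ :=
  sInf { n | ∃ ms, Feasible C ms ∧ relocCount ms = n }

/-- `g(L)`: `L` plus the minimum number of direct blockages over all partial
plans with exactly `L` relocations. -/
noncomputable def gIter {B S : ℕ} (C : Config B S) (L : ℕ) : ℕ :=
  L + sInf { d | ∃ ms : List (Move S), AllEnabled C ms ∧ relocCount ms = L ∧
      d = directBlockages (play C ms) }

section BRPAux

variable {B S : ℕ}

/-- Blockage count of a single stack. -/
def bc {B : ℕ} : List (Fin B) → ℕ
  | [] => 0
  | [_] => 0
  | a :: b :: l => (if a < b then 1 else 0) + bc (b :: l)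

lemma bc_eq : ∀ (l : List (Fin B)),
    ((l.zip l.tail).filter (fun p => decide (p.1 < p.2))).length = bc l
  | [] => rfl
  | [_] => rfl
  | a :: b :: l => by
    have ih := bc_eq (b :: l)
    simp only [List.tail_cons] at ih
    show ((((a, b) :: ((b :: l).zip l)).filter (fun p => decide (p.1 < p.2))).length) = _
    rw [List.filter_cons]
    by_cases h : a < b <;> simp [bc, h, ih] <;> omega

lemma bc_le_append : ∀ (l : List (Fin B)) (x : Fin B), bc l ≤ bc (l ++ [x])
  | [], x => Nat.zero_le _
  | [a], x => Nat.zero_le _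
  | a :: b :: l, x => by
    have ih := bc_le_append (b :: l) x
    simp only [List.cons_append, List.append_eq, bc] at ih ⊢
    omega

lemma bc_append_le : ∀ (l : List (Fin B)) (x : Fin B), bc (l ++ [x]) ≤ bc l + 1
  | [], x => Nat.zero_le _
  | [a], x => by by_cases h : a < x <;> simp [bc, h]
  | a :: b :: l, x => by
    have ih := bc_append_le (b :: l) x
    simp only [List.cons_append, List.append_eq, bc] at ih ⊢
    omega

lemma bc_append_min : ∀ (l : List (Fin B)) (x : Fin B), (∀ a ∈ l, x ≤ a) →
    bc (l ++ [x]) = bc l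
  | [], x, _ => rfl
  | [a], x, h => by
    have hax : ¬ a < x := not_lt.2 (h a (by simp))
    simp only [List.cons_append, List.nil_append, bc, hax, if_false]
  | a :: b :: l, x, h => by
    have ih := bc_append_min (b :: l) x (fun c hc => h c (List.mem_cons_of_mem a hc))
    simp only [List.cons_append, List.append_eq, bc] at ih ⊢
    omega

lemma directBlockages_eq (C : Config B S) : directBlockages C = ∑ s, bc (C s) :=
  Finset.sum_congr rfl (fun s _ => bc_eq (C s))

lemma play_append (l₁ l₂ : List (Move S)) : ∀ (C : Config B S),
    play C (l₁ ++ l₂) = play (play C l₁) l₂ := by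
  induction l₁ with
  | nil => intro C; rfl
  | cons m ms ih => intro C; exact ih (applyMove C m)

lemma allEnabled_append {l₁ l₂ : List (Move S)} : ∀ {C : Config B S},
    AllEnabled C l₁ → AllEnabled (play C l₁) l₂ → AllEnabled C (l₁ ++ l₂) := by
  induction l₁ with
  | nil => intro C _ h2; exact h2
  | cons m ms ih => intro C h1 h2; exact ⟨h1.1, ih h1.2 h2⟩

lemma mem_applyMove {C : Config B S} {m : Move S} {s' : Fin S} {b : Fin B}
    (h : b ∈ applyMove C m s') : ∃ s'', b ∈ C s'' := by
  cases m with
  | retrieve s =>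
    simp only [applyMove] at h
    by_cases hs : s' = s
    · subst hs
      rw [Function.update_self] at h
      exact ⟨s', (List.dropLast_sublist _).mem h⟩
    · rw [Function.update_of_ne hs] at h; exact ⟨s', h⟩
  | relocate src dst =>
    rcases Option.eq_none_or_eq_some ((C src).getLast?) with hb | ⟨x, hb⟩
    · simp only [applyMove, hb] at h; exact ⟨s', h⟩
    · have hx : x ∈ C src := by
        obtain ⟨ys, hys⟩ := List.getLast?_eq_some_iff.1 hb
        rw [hys]; simp
      simp only [applyMove, hb, Function.update_apply] at h
      split_ifs at h
      · rcases List.mem_append.1 h with h' | h'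
        · exact ⟨src, (List.dropLast_sublist _).mem h'⟩
        · have hbx : b = x := by simpa using h'
          exact ⟨src, hbx ▸ hx⟩
      · rcases List.mem_append.1 h with h' | h'
        · exact ⟨dst, h'⟩
        · have hbx : b = x := by simpa using h'
          exact ⟨src, hbx ▸ hx⟩
      · exact ⟨src, (List.dropLast_sublist _).mem h⟩
      · exact ⟨s', h⟩

lemma mem_play {ms : List (Move S)} : ∀ {C : Config B S} {s' : Fin S} {b : Fin B},
    b ∈ play C ms s' → ∃ s'', b ∈ C s'' := by
  induction ms with
  | nil => intro C s' b h; exact ⟨s', h⟩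
  | cons m ms ih =>
    intro C s' b h
    obtain ⟨s'', h''⟩ := ih h
    exact mem_applyMove h''

lemma sum_update_len (C : Config B S) (s : Fin S) (l : List (Fin B)) :
    ∑ s', ((Function.update C s l) s').length
      = l.length + ∑ s' ∈ Finset.univ \ {s}, (C s').length := by
  have : ∀ s', ((Function.update C s l) s').length
      = Function.update (fun s'' => (C s'').length) s l.length s' :=
    fun s' => Function.apply_update (fun _ x => List.length x) C s l s'
  rw [Finset.sum_congr rfl (fun s' _ => this s')]
  exact Finset.sum_update_of_mem (Finset.mem_univ s) _ _

lemma sum_len_split (C : Config B S) (s : Fin S) :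
    ∑ s', (C s').length = (C s).length + ∑ s' ∈ Finset.univ \ {s}, (C s').length := by
  have := Finset.add_sum_erase Finset.univ (fun s' => (C s').length) (Finset.mem_univ s)
  rw [← this, Finset.sdiff_singleton_eq_erase]

lemma total_retrieve (C : Config B S) (s : Fin S) (hne : C s ≠ []) :
    (∑ s', ((applyMove C (Move.retrieve s)) s').length) + 1 = ∑ s', (C s').length := by
  simp only [applyMove]
  rw [sum_update_len, sum_len_split C s, List.length_dropLast]
  have : 0 < (C s).length := List.length_pos_iff.2 hne
  omega

lemma total_relocate (C : Config B S) (src dst : Fin S) (hsd : src ≠ dst) :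
    ∑ s', ((applyMove C (Move.relocate src dst)) s').length = ∑ s', (C s').length := by
  simp only [applyMove]
  cases hb : (C src).getLast? with
  | none => rfl
  | some x =>
    simp only
    set D := Function.update C src (C src).dropLast with hD
    have hDdst : D dst = C dst := Function.update_of_ne (Ne.symm hsd) _ _
    rw [sum_update_len D dst, hDdst]
    have h1 : ∑ s' ∈ Finset.univ \ {dst}, (D s').length
        = (C src).dropLast.length + ∑ s' ∈ (Finset.univ \ {dst}) \ {src}, (C s').length := by
      have hsrc : src ∈ Finset.univ \ {dst} := by simp [hsd]
      have : ∀ s', (D s').length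
          = Function.update (fun s'' => (C s'').length) src (C src).dropLast.length s' :=
        fun s' => Function.apply_update (fun _ x => List.length x) C src _ s'
      rw [Finset.sum_congr rfl (fun s' _ => this s')]
      exact Finset.sum_update_of_mem hsrc _ _
    have h2 : ∑ s', (C s').length
        = (C dst).length + ((C src).length
            + ∑ s' ∈ (Finset.univ \ {dst}) \ {src}, (C s').length) := by
      rw [sum_len_split C dst]
      congr 1
      have hsrc : src ∈ Finset.univ \ {dst} := by simp [hsd]
      rw [← Finset.add_sum_erase _ (fun s' => (C s').length) hsrc]
      simp only [Finset.sdiff_singleton_eq_erase]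
    have hne : C src ≠ [] := by
      intro h; rw [h] at hb; simp at hb
    have hpos : 0 < (C src).length := List.length_pos_iff.2 hne
    rw [h1, h2]
    simp only [List.length_append, List.length_dropLast, List.length_cons,
      List.length_nil]
    omega

lemma reloc_spec (src dst : Fin S) (hsd : src ≠ dst) :
    ∀ (k : ℕ) (C : Config B S), k ≤ (C src).length →
      AllEnabled C (List.replicate k (Move.relocate src dst)) ∧
      (play C (List.replicate k (Move.relocate src dst))) src
        = (C src).take ((C src).length - k) ∧
      (∑ s, ((play C (List.replicate k (Move.relocate src dst))) s).length)
        = ∑ s, (C s).length := by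
  intro k
  induction k with
  | zero =>
    intro C _
    refine ⟨trivial, ?_, rfl⟩
    simp [play, List.take_length]
  | succ k ih =>
    intro C hk
    have hne : C src ≠ [] := by
      intro h
      rw [h] at hk; simp at hk
    have hb : ∃ x, (C src).getLast? = some x := ⟨_, List.getLast?_eq_getLast hne⟩
    obtain ⟨x, hx⟩ := hb
    set C₁ := applyMove C (Move.relocate src dst) with hC₁
    have hC₁src : C₁ src = (C src).dropLast := by
      simp only [hC₁, applyMove, hx]
      rw [Function.update_of_ne hsd, Function.update_self]
    have hlen : (C₁ src).length = (C src).length - 1 := by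
      rw [hC₁src, List.length_dropLast]
    have hk' : k ≤ (C₁ src).length := by omega
    obtain ⟨hen, hplay, htot⟩ := ih C₁ hk'
    have hrep : List.replicate (k + 1) (Move.relocate src dst)
        = Move.relocate src dst :: List.replicate k (Move.relocate src dst) :=
      List.replicate_succ
    refine ⟨?_, ?_, ?_⟩
    · rw [hrep]; exact ⟨⟨hsd, hne⟩, hen⟩
    · rw [hrep]
      show play C₁ _ src = _
      rw [hplay, hlen, hC₁src, List.dropLast_eq_take, List.take_take]
      congr 1
      simp only [Nat.min_def]
      split <;> omega
    · rw [hrep]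
      show (∑ s, ((play C₁ _) s).length) = _
      rw [htot, hC₁]
      exact total_relocate C src dst hsd

lemma exists_feasible (hS : 2 ≤ S) :
    ∀ (n : ℕ) (C : Config B S), (∑ s, (C s).length) ≤ n → ∃ ms, Feasible C ms := by
  intro n
  induction n with
  | zero =>
    intro C h
    refine ⟨[], trivial, fun s => ?_⟩
    have h1 : (C s).length ≤ ∑ s', (C s').length :=
      Finset.single_le_sum (f := fun s => (C s).length)
        (fun i _ => Nat.zero_le _) (Finset.mem_univ s)
    have : (C s).length = 0 := by omega
    exact List.length_eq_zero_iff.1 this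
  | succ n ih =>
    intro C h
    by_cases h0 : ∑ s, (C s).length = 0
    · refine ⟨[], trivial, fun s => ?_⟩
      have h1 : (C s).length ≤ ∑ s', (C s').length :=
        Finset.single_le_sum (f := fun s => (C s).length)
          (fun i _ => Nat.zero_le _) (Finset.mem_univ s)
      have : (C s).length = 0 := by omega
      exact List.length_eq_zero_iff.1 this
    · -- there is a nonempty stack
      have hT : ∃ s₀ x, x ∈ C s₀ := by
        by_contra hc
        push_neg at hc
        apply h0
        refine Finset.sum_eq_zero (fun s _ => ?_)
        rw [List.length_eq_zero_iff]
        exact List.eq_nil_iff_forall_not_mem.2 (hc s)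
      set T : Finset (Fin B) := Finset.univ.biUnion (fun s => (C s).toFinset) with hTdef
      have hTne : T.Nonempty := by
        obtain ⟨s₀, x, hx⟩ := hT
        exact ⟨x, by simp [hTdef, List.mem_toFinset]; exact ⟨s₀, hx⟩⟩
      set b := T.min' hTne with hbdef
      have hbT : b ∈ T := T.min'_mem hTne
      have hbmin : ∀ (s' : Fin S), ∀ b' ∈ C s', b ≤ b' := by
        intro s' b' hb'
        refine T.min'_le b' ?_
        simp [hTdef, List.mem_toFinset]
        exact ⟨s', hb'⟩
      obtain ⟨s₀, hbs₀⟩ : ∃ s₀, b ∈ C s₀ := by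
        simpa [hTdef, List.mem_toFinset] using hbT
      obtain ⟨i, hi, hib⟩ := List.mem_iff_getElem.1 hbs₀
      obtain ⟨t, ht⟩ : ∃ t : Fin S, t ≠ s₀ :=
        Fintype.exists_ne_of_one_lt_card (by simp; omega) s₀
      set k := (C s₀).length - (i + 1) with hkdef
      have hk : k ≤ (C s₀).length := by omega
      obtain ⟨hen, hplay, htot⟩ := reloc_spec s₀ t (Ne.symm ht) k C hk
      set rep := List.replicate k (Move.relocate s₀ t) with hrep
      set D := play C rep with hD
      have hDs₀ : D s₀ = (C s₀).take (i + 1) := by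
        rw [hplay]; congr 1; omega
      have hDlast : (D s₀).getLast? = some b := by
        rw [hDs₀, List.getLast?_eq_getElem?]
        have hlt : (List.take (i + 1) (C s₀)).length = i + 1 := by
          rw [List.length_take]; omega
        rw [hlt]
        simp only [Nat.add_sub_cancel]
        rw [List.getElem?_take]
        simp only [Nat.lt_succ_self, if_true]
        rw [List.getElem?_eq_getElem hi, hib]
      have hDmin : ∀ (s' : Fin S), ∀ b' ∈ D s', b ≤ b' := by
        intro s' b' hb'
        obtain ⟨s'', hb''⟩ := mem_play hb'
        exact hbmin s'' b' hb''
      have hret : Enabled D (Move.retrieve s₀) := ⟨b, hDlast, hDmin⟩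
      set E := applyMove D (Move.retrieve s₀) with hE
      have hDne : D s₀ ≠ [] := by
        intro hnil; rw [hnil] at hDlast; simp at hDlast
      have hEtot : (∑ s, (E s).length) + 1 = ∑ s, (D s).length :=
        total_retrieve D s₀ hDne
      have hEle : (∑ s, (E s).length) ≤ n := by
        rw [htot] at hEtot; omega
      obtain ⟨ms₂, hms₂en, hms₂end⟩ := ih E hEle
      refine ⟨rep ++ (Move.retrieve s₀ :: ms₂), ?_, ?_⟩
      · exact allEnabled_append hen ⟨hret, hms₂en⟩
      · intro s
        rw [play_append]
        show play E ms₂ s = []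
        exact hms₂end s

lemma step_retrieve (C : Config B S) (s : Fin S) (hm : Enabled C (Move.retrieve s)) :
    directBlockages C = directBlockages (applyMove C (Move.retrieve s)) := by
  obtain ⟨b, hb, hmin⟩ := hm
  obtain ⟨ys, hys⟩ := List.getLast?_eq_some_iff.1 hb
  have hdl : (C s).dropLast = ys := by rw [hys]; exact List.dropLast_concat
  rw [directBlockages_eq, directBlockages_eq]
  refine Finset.sum_congr rfl (fun s' _ => ?_)
  simp only [applyMove]
  by_cases hs : s' = s
  · subst hs
    rw [Function.update_self, hdl]
    conv_lhs => rw [hys]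
    exact bc_append_min ys b (fun a ha => hmin s' a (by rw [hys]; exact List.mem_append_left _ ha))
  · rw [Function.update_of_ne hs]

lemma step_relocate (C : Config B S) (src dst : Fin S) (hsd : src ≠ dst)
    (hne : C src ≠ []) :
    directBlockages C ≤ 1 + directBlockages (applyMove C (Move.relocate src dst)) := by
  have hb : ∃ x, (C src).getLast? = some x := ⟨_, List.getLast?_eq_getLast hne⟩
  obtain ⟨x, hx⟩ := hb
  obtain ⟨ys, hys⟩ := List.getLast?_eq_some_iff.1 hx
  have hdl : (C src).dropLast = ys := by rw [hys]; exact List.dropLast_concat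
  rw [directBlockages_eq, directBlockages_eq]
  set C' := applyMove C (Move.relocate src dst) with hC'
  have hC'eq : ∀ s', C' s' = if s' = dst then C dst ++ [x]
      else if s' = src then ys else C s' := by
    intro s'
    simp only [hC', applyMove, hx]
    by_cases h1 : s' = dst
    · subst h1
      rw [Function.update_self, Function.update_of_ne (Ne.symm hsd), if_pos rfl]
    · rw [Function.update_of_ne h1, if_neg h1]
      by_cases h2 : s' = src
      · subst h2; rw [Function.update_self, hdl, if_pos rfl]
      · rw [Function.update_of_ne h2, if_neg h2]
  have hptwise : ∀ s', bc (C s') ≤ bc (C' s') + (if s' = src then 1 else 0) := by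
    intro s'
    rw [hC'eq s']
    by_cases h1 : s' = dst
    · subst h1
      rw [if_pos rfl, if_neg (Ne.symm hsd)]
      exact le_trans (bc_le_append _ x) (Nat.le_add_right _ _)
    · rw [if_neg h1]
      by_cases h2 : s' = src
      · subst h2
        rw [if_pos rfl, if_pos rfl]
        calc bc (C s') = bc (ys ++ [x]) := by rw [hys]
          _ ≤ bc ys + 1 := bc_append_le ys x
      · rw [if_neg h2, if_neg h2]; simp
  calc ∑ s', bc (C s') ≤ ∑ s', (bc (C' s') + (if s' = src then 1 else 0)) :=
        Finset.sum_le_sum (fun s' _ => hptwise s')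
    _ = (∑ s', bc (C' s')) + ∑ s', (if s' = src then 1 else 0) := Finset.sum_add_distrib
    _ = (∑ s', bc (C' s')) + 1 := by rw [Finset.sum_ite_eq' Finset.univ src fun _ => 1]; simp
    _ = 1 + ∑ s', bc (C' s') := by omega

lemma count_le : ∀ (ms : List (Move S)) (C : Config B S), AllEnabled C ms →
    directBlockages C
      ≤ countMoves (RelocIn (Set.univ : Set (Fin B))) C ms + directBlockages (play C ms) := by
  intro ms
  induction ms with
  | nil => intro C _; simp [countMoves, play]
  | cons m ms ih =>
    intro C h
    obtain ⟨hm, hms⟩ := h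
    have ihx := ih (applyMove C m) hms
    show directBlockages C
      ≤ ((@ite ℕ (RelocIn Set.univ C m) (Classical.propDecidable _) 1 0)
          + countMoves (RelocIn Set.univ) (applyMove C m) ms)
        + directBlockages (play (applyMove C m) ms)
    cases m with
    | retrieve s =>
      have hno : ¬ RelocIn (Set.univ : Set (Fin B)) C (Move.retrieve s) := by
        rintro ⟨b, -, src, dst, heq, -⟩
        cases heq
      rw [if_neg hno]
      have := step_retrieve C s hm
      omega
    | relocate src dst =>
      obtain ⟨hsd, hne⟩ := hm
      have hb : ∃ x, (C src).getLast? = some x := ⟨_, List.getLast?_eq_getLast hne⟩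
      obtain ⟨x, hx⟩ := hb
      have hyes : RelocIn (Set.univ : Set (Fin B)) C (Move.relocate src dst) :=
        ⟨x, Set.mem_univ x, src, dst, rfl, hsd, hx⟩
      rw [if_pos hyes]
      have := step_relocate C src dst hsd hne
      omega

end BRPAux

/-- direct-blockage lower bound: every feasible move sequence for
`C` contains at least as many relocations as the number of direct blockages of
`C`; in particular `f(Fin B)` is at least the number of direct blockages of `C`. -/
theorem brp_directBlockage_LB {B S : ℕ} (hS : 2 ≤ S) (hB : 1 ≤ B)
    (C : Config B S) (hC : IsConfig C) :
    (∀ ms, Feasible C ms →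
      directBlockages C ≤ countMoves (RelocIn (Set.univ : Set (Fin B))) C ms) ∧
    directBlockages C ≤ fRel C Set.univ := by
  have main : ∀ ms, Feasible C ms →
      directBlockages C ≤ countMoves (RelocIn (Set.univ : Set (Fin B))) C ms := by
    intro ms ⟨hen, hend⟩
    have h := count_le ms C hen
    have hz : directBlockages (play C ms) = 0 := by
      rw [directBlockages_eq]
      refine Finset.sum_eq_zero (fun s _ => ?_)
      rw [hend s]; rfl
    omega
  refine ⟨main, ?_⟩
  obtain ⟨ms₀, hms₀⟩ := exists_feasible hS (∑ s, (C s).length) C (le_refl _)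
  refine le_csInf ⟨countMoves (RelocIn Set.univ) C ms₀, ms₀, hms₀, rfl⟩ ?_
  rintro n ⟨ms, hms, rfl⟩
  exact main ms hms
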